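/- Define U : ℝ² → ℝ by U(x₁,x₂) = |x₁|⁴ if |x₁| ≤ |x₂|^{-1} (interpreting |x₂|^{-1} = ∞ when x₂ = 0) and U(x₁,x₂) = |x₂|^{-4} otherwise. Then U ≥ 0, and the set of symmetric 2×2 matrices A with ∫_{ℝ²} exp(-½xᵀAx - U(x)) dx < ∞ is exactly the set of positive definite matrices; in particular this domain is open. -/

import Mathlib

open MeasureTheory
open scoped ENNReal

noncomputable def quadForm2 (A : Matrix (Fin 2) (Fin 2) ℝ) (x : Fin 2 → ℝ) : ℝ :=
  ∑ i, ∑ j, A i j * x i * x j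

/-- The counterexample interaction of weak but not strong growth:
`U(x₁,x₂) = |x₁|⁴` if `|x₁| ≤ |x₂|⁻¹` (always when `x₂ = 0`), and `|x₂|⁻⁴` otherwise. -/
noncomputable def Ucex (x : Fin 2 → ℝ) : ℝ :=
  if |x 0| * |x 1| ≤ 1 then |x 0| ^ 4 else (|x 1| ^ 4)⁻¹

noncomputable def Zcex (A : Matrix (Fin 2) (Fin 2) ℝ) (U : (Fin 2 → ℝ) → ℝ) : ℝ≥0∞ :=
  ∫⁻ x : Fin 2 → ℝ, ENNReal.ofReal (Real.exp (-(1 / 2) * quadForm2 A x - U x))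

section CexAux

open Matrix

lemma quad_eq (A : Matrix (Fin 2) (Fin 2) ℝ) (x : Fin 2 → ℝ) :
    quadForm2 A x = A 0 0 * (x 0)^2 + (A 0 1 + A 1 0) * (x 0 * x 1) + A 1 1 * (x 1)^2 := by
  simp [quadForm2, Fin.sum_univ_two]; ring

lemma Ucex_nonneg (x : Fin 2 → ℝ) : 0 ≤ Ucex x := by
  unfold Ucex; split <;> positivity

lemma Ucex_le_one {x : Fin 2 → ℝ} (hx : 1 ≤ |x 1|) : Ucex x ≤ 1 := by
  unfold Ucex
  split
  case isTrue h =>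
    have h0 : |x 0| ≤ 1 := by nlinarith [abs_nonneg (x 0), abs_nonneg (x 1)]
    calc |x 0| ^ 4 ≤ 1 ^ 4 := by
          apply pow_le_pow_left₀ (abs_nonneg _) h0
      _ = 1 := by norm_num
  case isFalse h =>
    have h4 : (1:ℝ) ≤ |x 1| ^ 4 := one_le_pow₀ hx
    exact inv_le_one_of_one_le₀ h4

lemma measurable_Ucex : Measurable Ucex := by
  unfold Ucex
  exact Measurable.ite
    (measurableSet_le (((measurable_pi_apply 0).abs.mul (measurable_pi_apply 1).abs)) measurable_const)
    ((measurable_pi_apply 0).abs.pow_const 4)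
    (((measurable_pi_apply 1).abs.pow_const 4).inv)

lemma measurable_quad (A : Matrix (Fin 2) (Fin 2) ℝ) : Measurable (quadForm2 A) := by
  unfold quadForm2
  fun_prop

lemma measurable_integrand (A : Matrix (Fin 2) (Fin 2) ℝ) :
    Measurable fun x : Fin 2 → ℝ => ENNReal.ofReal (Real.exp (-(1 / 2) * quadForm2 A x - Ucex x)) := by
  apply Measurable.ennreal_ofReal
  exact Real.measurable_exp.comp ((measurable_const.mul (measurable_quad A)).sub measurable_Ucex)

/-- divergence core lemma -/
lemma zcex_top_of_region (A : Matrix (Fin 2) (Fin 2) ℝ) (v w : Fin 2 → ℝ)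
    (hdet : v 0 * w 1 - w 0 * v 1 ≠ 0) (T C : ℝ) (hT : 0 ≤ T)
    (hq : ∀ s, 0 ≤ s → ∀ t ∈ Set.Icc (1:ℝ) 2,
      quadForm2 A (fun i => s * v i + t * w i) ≤ C)
    (hx1 : ∀ s, T ≤ s → ∀ t ∈ Set.Icc (1:ℝ) 2, 1 ≤ |s * v 1 + t * w 1|) :
    Zcex A Ucex = ⊤ := by
  classical
  set M : Matrix (Fin 2) (Fin 2) ℝ := !![v 0, w 0; v 1, w 1] with hM
  have hMdet : M.det ≠ 0 := by
    rw [Matrix.det_fin_two]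
    simpa [hM] using hdet
  have hMinvdet : (M⁻¹).det ≠ 0 := by
    rw [Matrix.det_nonsing_inv]
    simpa [Ring.inverse_eq_inv'] using inv_ne_zero hMdet
  set f : (Fin 2 → ℝ) →ₗ[ℝ] (Fin 2 → ℝ) := Matrix.toLin' (M⁻¹) with hf
  have hfdet : LinearMap.det f ≠ 0 := by
    rw [hf, LinearMap.det_toLin']
    exact hMinvdet
  set E : Set (Fin 2 → ℝ) :=
    Set.univ.pi (fun i => if i = 0 then Set.Ici T else Set.Icc 1 2) with hE
  have hEmeas : MeasurableSet E := by
    apply MeasurableSet.univ_pi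
    intro i
    split
    · exact measurableSet_Ici
    · exact measurableSet_Icc
  have hEvol : volume E = ⊤ := by
    rw [hE, volume_pi_pi]
    rw [Fin.prod_univ_two]
    simp [Real.volume_Ici, Real.volume_Icc]
  set S : Set (Fin 2 → ℝ) := f ⁻¹' E with hS
  have hSmeas : MeasurableSet S :=
    (f.continuous_of_finiteDimensional.measurable) hEmeas
  have hSvol : volume S = ⊤ := by
    rw [hS, MeasureTheory.Measure.addHaar_preimage_linearMap volume hfdet]
    rw [hEvol, ENNReal.mul_top]
    simp only [ne_eq, ENNReal.ofReal_eq_zero, not_le, abs_pos]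
    exact inv_ne_zero hfdet
  -- pointwise bound on S
  have key : ∀ x ∈ S, ENNReal.ofReal (Real.exp (-(1/2) * C - 1)) ≤
      ENNReal.ofReal (Real.exp (-(1/2) * quadForm2 A x - Ucex x)) := by
    intro x hx
    set p : Fin 2 → ℝ := (M⁻¹).mulVec x with hp
    have hpE : p ∈ E := by
      rw [hS, Set.mem_preimage] at hx
      simpa [hf, Matrix.toLin'_apply, hp] using hx
    have hp0 : T ≤ p 0 := by
      have := hpE 0 (Set.mem_univ 0)
      simpa using this
    have hp1 : p 1 ∈ Set.Icc (1:ℝ) 2 := by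
      have := hpE 1 (Set.mem_univ 1)
      simpa using this
    have hxp : x = fun i => p 0 * v i + p 1 * w i := by
      have hMp : M.mulVec p = x := by
        rw [hp, Matrix.mulVec_mulVec, Matrix.mul_nonsing_inv _ (isUnit_iff_ne_zero.mpr hMdet), Matrix.one_mulVec]
      funext i
      have := congrFun hMp i
      rw [← this]
      fin_cases i <;>
        simp [hM, Matrix.mulVec, dotProduct, Fin.sum_univ_two] <;> ring
    have hq' : quadForm2 A x ≤ C := by
      rw [hxp]
      exact hq (p 0) (le_trans hT hp0) (p 1) hp1
    have hU : Ucex x ≤ 1 := by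
      apply Ucex_le_one
      have := hx1 (p 0) hp0 (p 1) hp1
      rw [hxp]
      simpa using this
    apply ENNReal.ofReal_le_ofReal
    apply Real.exp_le_exp.mpr
    nlinarith
  have hge : ENNReal.ofReal (Real.exp (-(1/2) * C - 1)) * volume S ≤ Zcex A Ucex := by
    calc ENNReal.ofReal (Real.exp (-(1/2) * C - 1)) * volume S
        = ∫⁻ _ in S, ENNReal.ofReal (Real.exp (-(1/2) * C - 1)) := by
          rw [setLIntegral_const]
      _ ≤ ∫⁻ x in S, ENNReal.ofReal (Real.exp (-(1/2) * quadForm2 A x - Ucex x)) :=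
          setLIntegral_mono' hSmeas key
      _ ≤ Zcex A Ucex := by
          rw [Zcex]
          apply setLIntegral_le_lintegral
  rw [hSvol, ENNReal.mul_top] at hge
  · exact top_le_iff.mp hge
  · simp [Real.exp_pos]

lemma quad_expand (A : Matrix (Fin 2) (Fin 2) ℝ) (v w : Fin 2 → ℝ) (s t : ℝ) :
    quadForm2 A (fun i => s * v i + t * w i) =
      s^2 * quadForm2 A v
      + s * t * (A 0 0 * (2 * v 0 * w 0) + A 0 1 * (v 0 * w 1 + v 1 * w 0)
          + A 1 0 * (v 0 * w 1 + v 1 * w 0) + A 1 1 * (2 * v 1 * w 1))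
      + t^2 * quadForm2 A w := by
  simp [quadForm2, Fin.sum_univ_two]; ring

/-- second-level: direction with nonpositive value and nonpositive cross term -/
lemma zcex_top_of_dir (A : Matrix (Fin 2) (Fin 2) ℝ) (v w : Fin 2 → ℝ)
    (hdet : v 0 * w 1 - w 0 * v 1 ≠ 0)
    (hqv : quadForm2 A v ≤ 0)
    (hB : A 0 0 * (2 * v 0 * w 0) + A 0 1 * (v 0 * w 1 + v 1 * w 0)
          + A 1 0 * (v 0 * w 1 + v 1 * w 0) + A 1 1 * (2 * v 1 * w 1) ≤ 0)
    (T : ℝ) (hT : 0 ≤ T)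
    (hx1 : ∀ s, T ≤ s → ∀ t ∈ Set.Icc (1:ℝ) 2, 1 ≤ |s * v 1 + t * w 1|) :
    Zcex A Ucex = ⊤ := by
  apply zcex_top_of_region A v w hdet T (4 * |quadForm2 A w|) hT _ hx1
  intro s hs t ht
  rw [quad_expand]
  have ht4 : t^2 ≤ 4 := by nlinarith [ht.1, ht.2]
  have ht0 : (0:ℝ) ≤ t := le_trans zero_le_one ht.1
  have h1 : s^2 * quadForm2 A v ≤ 0 := mul_nonpos_of_nonneg_of_nonpos (sq_nonneg s) hqv
  have h2 : s * t * (A 0 0 * (2 * v 0 * w 0) + A 0 1 * (v 0 * w 1 + v 1 * w 0)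
          + A 1 0 * (v 0 * w 1 + v 1 * w 0) + A 1 1 * (2 * v 1 * w 1)) ≤ 0 :=
    mul_nonpos_of_nonneg_of_nonpos (mul_nonneg hs ht0) hB
  nlinarith [le_abs_self (quadForm2 A w), abs_nonneg (quadForm2 A w), sq_nonneg t]

/-- helper producing hx1 when v 1 ≠ 0 -/
lemma hx1_helper {v1 w1 : ℝ} (hv1 : v1 ≠ 0) :
    ∀ s, (1 + 2 * |w1|) / |v1| ≤ s → ∀ t ∈ Set.Icc (1:ℝ) 2, 1 ≤ |s * v1 + t * w1| := by
  intro s hs t ht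
  have hv1' : 0 < |v1| := abs_pos.mpr hv1
  have hsv : 1 + 2 * |w1| ≤ s * |v1| := (div_le_iff₀ hv1').mp hs
  have h1 : |s * v1| - |t * w1| ≤ |s * v1 + t * w1| := by
    have := abs_sub_abs_le_abs_sub (s * v1) (-(t * w1))
    simpa [sub_neg_eq_add] using this
  have hs0 : 0 ≤ s := by
    have : 0 < 1 + 2 * |w1| := by positivity
    nlinarith [abs_nonneg v1]
  have h2 : |s * v1| = s * |v1| := by rw [abs_mul, abs_of_nonneg hs0]
  have h3 : |t * w1| ≤ 2 * |w1| := by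
    rw [abs_mul, abs_of_nonneg (le_trans zero_le_one ht.1)]
    nlinarith [abs_nonneg w1, ht.2]
  linarith [h1, hsv, h3, h2.symm.le, h2.le]

lemma hT_helper (w1 : ℝ) (v1 : ℝ) : (0:ℝ) ≤ (1 + 2 * |w1|) / |v1| := by positivity

/-- main divergence result -/
lemma zcex_top_of_nd (A : Matrix (Fin 2) (Fin 2) ℝ) (h10 : A 1 0 = A 0 1)
    (hnd : A 0 0 ≤ 0 ∨ A 0 0 * A 1 1 - A 0 1 * A 0 1 ≤ 0) :
    Zcex A Ucex = ⊤ := by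
  have hqv_eval : ∀ y0 y1 : ℝ, quadForm2 A ![y0, y1]
      = A 0 0 * y0^2 + 2 * A 0 1 * y0 * y1 + A 1 1 * y1^2 := by
    intro y0 y1
    rw [quad_eq]
    simp [h10]
    ring
  rcases lt_trichotomy (A 1 1) 0 with hc | hc | hc
  · -- c < 0 : v = (0,1), w = (c, -b)
    apply zcex_top_of_dir A ![0, 1] ![A 1 1, -(A 0 1)]
    · simp; nlinarith
    · rw [hqv_eval]; nlinarith
    · simp [h10]; ring_nf; rfl
    · exact hT_helper (-(A 0 1)) 1
    · intro s hs t ht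
      have := hx1_helper (v1 := 1) (w1 := -(A 0 1)) one_ne_zero s (by simpa using hs) t ht
      simpa using this
  · -- c = 0
    rcases eq_or_ne (A 0 1) 0 with hb | hb
    · -- b = 0 : v = (0,1), w = (1,0)
      apply zcex_top_of_dir A ![0, 1] ![1, 0]
      · norm_num
      · rw [hqv_eval]; nlinarith
      · simp [h10, hb, hc]
      · exact hT_helper 0 1
      · intro s hs t ht
        have := hx1_helper (v1 := 1) (w1 := 0) one_ne_zero s (by simpa using hs) t ht
        simpa using this
    · -- b ≠ 0 : v = (u,1), w = (b*u, -(a*u+b))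
      obtain ⟨u, hK⟩ : ∃ u : ℝ, A 0 0 * u^2 + 2 * A 0 1 * u < 0 := by
        rcases le_or_gt (A 0 0) 0 with ha | ha
        · exact ⟨-(A 0 1), by nlinarith [sq_nonneg (A 0 1), mul_self_pos.mpr hb]⟩
        · refine ⟨-(A 0 1)/(A 0 0), ?_⟩
          have h1 : A 0 0 * (-(A 0 1)/(A 0 0))^2 + 2 * A 0 1 * (-(A 0 1)/(A 0 0))
              = -((A 0 1)^2)/(A 0 0) := by field_simp; ring
          rw [h1]
          have h2 : 0 < (A 0 1)^2 := by positivity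
          exact div_neg_of_neg_of_pos (by linarith) ha
      apply zcex_top_of_dir A ![u, 1] ![A 0 1 * u, -(A 0 0 * u + A 0 1)]
      · simp; nlinarith
      · rw [hqv_eval]; nlinarith
      · simp [h10, hc]; ring_nf; norm_num
      · exact hT_helper (-(A 0 0 * u + A 0 1)) 1
      · intro s hs t ht
        have := hx1_helper (v1 := 1) (w1 := -(A 0 0 * u + A 0 1)) one_ne_zero s
          (by simpa using hs) t ht
        simpa using this
  · -- c > 0
    have hnd' : A 0 0 * A 1 1 - (A 0 1)^2 ≤ 0 := by
      rcases hnd with h | h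
      · nlinarith [sq_nonneg (A 0 1)]
      · nlinarith
    rcases eq_or_ne (A 0 1) 0 with hb | hb
    · -- b = 0, so a ≤ 0
      have ha : A 0 0 ≤ 0 := by nlinarith
      rcases eq_or_lt_of_le ha with ha0 | ha0
      · -- a = 0 : v = (1,0), w = (0,1)
        apply zcex_top_of_dir A ![1, 0] ![0, 1]
        · norm_num
        · rw [hqv_eval]; nlinarith
        · simp [h10, hb, ha0]
        · exact le_refl 0
        · intro s hs t ht
          have h1 : (1:ℝ) ≤ t := ht.1
          calc (1:ℝ) ≤ t := h1
            _ ≤ |t| := le_abs_self t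
            _ = |s * 0 + t * 1| := by norm_num
      · -- a < 0 : v = (1, sqrt (-a/c)), w = (1,0)
        set u : ℝ := Real.sqrt (-(A 0 0)/(A 1 1)) with hu
        have hu2 : u^2 = -(A 0 0)/(A 1 1) := Real.sq_sqrt (div_nonneg (by linarith) hc.le)
        have hcu : A 1 1 * u^2 = -(A 0 0) := by
          rw [hu2]; field_simp
        have hupos : 0 < u := Real.sqrt_pos.mpr (div_pos (by linarith) hc)
        apply zcex_top_of_dir A ![1, u] ![1, 0]
        · simpa using hupos.ne'
        · rw [hqv_eval]; nlinarith
        · simp [h10, hb]; nlinarith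
        · exact hT_helper 0 u
        · exact fun s hs t ht => by
            have := hx1_helper (v1 := u) (w1 := 0) hupos.ne' s (by simpa using hs) t ht
            simpa using this
    · -- b ≠ 0 : v = (1, -b/c), w = (1,0)
      have hqvle : quadForm2 A ![1, -(A 0 1)/(A 1 1)] ≤ 0 := by
        rw [hqv_eval]
        have h1 : A 0 0 * 1^2 + 2 * A 0 1 * 1 * (-(A 0 1)/(A 1 1))
            + A 1 1 * (-(A 0 1)/(A 1 1))^2 = (A 0 0 * A 1 1 - (A 0 1)^2)/(A 1 1) := by
          field_simp; ring
        rw [h1]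
        exact div_nonpos_of_nonpos_of_nonneg hnd' hc.le
      have hBle : A 0 0 + A 0 1 * (-(A 0 1)/(A 1 1)) ≤ 0 := by
        have h1 : A 0 0 + A 0 1 * (-(A 0 1)/(A 1 1)) = (A 0 0 * A 1 1 - (A 0 1)^2)/(A 1 1) := by
          field_simp; ring
        rw [h1]
        exact div_nonpos_of_nonpos_of_nonneg hnd' hc.le
      have huz : -(A 0 1)/(A 1 1) ≠ 0 := by
        apply div_ne_zero (neg_ne_zero.mpr hb) hc.ne'
      apply zcex_top_of_dir A ![1, -(A 0 1)/(A 1 1)] ![1, 0]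
      · simpa using huz
      · exact hqvle
      · simp [h10]; nlinarith [hBle]
      · exact hT_helper 0 (-(A 0 1)/(A 1 1))
      · exact fun s hs t ht => by
          have := hx1_helper (v1 := -(A 0 1)/(A 1 1)) (w1 := 0) huz s (by simpa using hs) t ht
          simpa using this

/-- PosDef characterization for symmetric 2x2 -/
lemma posdef_iff (A : Matrix (Fin 2) (Fin 2) ℝ) (hA : A.IsSymm) :
    A.PosDef ↔ 0 < A 0 0 ∧ 0 < A 0 0 * A 1 1 - A 0 1 * A 1 0 := by
  have h10 : A 1 0 = A 0 1 := by
    have := congrFun (congrFun hA 0) 1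
    simpa [Matrix.transpose_apply] using this
  have hdot : ∀ x : Fin 2 → ℝ, dotProduct (star x) (A *ᵥ x)
      = A 0 0 * (x 0)^2 + 2 * A 0 1 * (x 0 * x 1) + A 1 1 * (x 1)^2 := by
    intro x
    simp [dotProduct, Matrix.mulVec, Fin.sum_univ_two, h10]
    ring
  rw [Matrix.posDef_iff_dotProduct_mulVec]
  constructor
  · rintro ⟨-, hpos⟩
    have h1 : (0:ℝ) < A 0 0 := by
      have := hpos (x := ![1, 0]) (by intro h; simpa using congrFun h 0)
      rw [hdot] at this
      simpa using this
    refine ⟨h1, ?_⟩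
    have h2 := hpos (x := ![A 0 1, -(A 0 0)]) (by
      intro h
      have := congrFun h 1
      simp at this
      linarith)
    rw [hdot] at h2
    simp at h2
    rw [h10]
    nlinarith
  · rintro ⟨h1, h2⟩
    constructor
    · rw [Matrix.IsHermitian]
      ext i j
      simp only [Matrix.conjTranspose_apply, RCLike.star_def, starRingEnd_apply, star_trivial]
      exact congrFun (congrFun hA i) j
    · intro x hx
      rw [hdot]
      have hx' : x 0 ≠ 0 ∨ x 1 ≠ 0 := by
        by_contra h
        push_neg at h
        apply hx
        funext i
        fin_cases i
        · exact h.1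
        · exact h.2
      rw [h10] at h2
      rcases eq_or_ne (x 1) 0 with h0 | h0
      · have hx0 : x 0 ≠ 0 := by
          rcases hx' with h | h
          · exact h
          · exact absurd h0 h
        rw [h0]
        have := mul_self_pos.mpr hx0
        nlinarith
      · have := mul_self_pos.mpr h0
        nlinarith [sq_nonneg (A 0 0 * x 0 + A 0 1 * x 1)]

/-- finiteness for positive definite -/
lemma zcex_finite (A : Matrix (Fin 2) (Fin 2) ℝ) (h10 : A 1 0 = A 0 1)
    (h1 : 0 < A 0 0) (h2 : 0 < A 0 0 * A 1 1 - A 0 1 * A 0 1) :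
    Zcex A Ucex ≠ ⊤ := by
  have hc : 0 < A 1 1 := by nlinarith [sq_nonneg (A 0 1)]
  set a := A 0 0
  set b := A 0 1
  set c := A 1 1
  set ε : ℝ := min a (min c ((a * c - b^2)/(a + c))) with hε
  have hεa : ε ≤ a := min_le_left _ _
  have hεc : ε ≤ c := (min_le_right _ _).trans (min_le_left _ _)
  have hεd : ε ≤ (a * c - b^2)/(a + c) := (min_le_right _ _).trans (min_le_right _ _)
  have hac : 0 < a + c := by linarith
  have hεpos : 0 < ε := by
    apply lt_min h1
    apply lt_min hc
    apply div_pos _ hac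
    nlinarith
  have hεd' : ε * (a + c) ≤ a * c - b^2 := by
    exact (le_div_iff₀ hac).mp hεd
  have hprod : b^2 ≤ (a - ε) * (c - ε) := by nlinarith [sq_nonneg ε]
  have key : ∀ x : Fin 2 → ℝ, ε * ((x 0)^2 + (x 1)^2) ≤ quadForm2 A x := by
    intro x
    rw [quad_eq, h10]
    rcases eq_or_lt_of_le (show (0:ℝ) ≤ a - ε by linarith) with h | h
    · have hb0 : b = 0 := by nlinarith [sq_nonneg b]
      rw [show A 0 1 = b from rfl, hb0]
      nlinarith [sq_nonneg (x 0), sq_nonneg (x 1)]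
    · nlinarith [sq_nonneg ((a - ε) * x 0 + b * x 1), sq_nonneg (x 1),
        mul_nonneg (mul_nonneg (sub_nonneg.mpr hεa) (sub_nonneg.mpr hεc)) (sq_nonneg (x 1)),
        mul_nonneg (le_trans (sq_nonneg b) hprod) (sq_nonneg (x 1))]
  -- bound by product of Gaussians
  have hbound : Zcex A Ucex ≤
      ∫⁻ x : Fin 2 → ℝ, ENNReal.ofReal (Real.exp (-(ε/2) * (x 0)^2))
        * ENNReal.ofReal (Real.exp (-(ε/2) * (x 1)^2)) := by
    rw [Zcex]
    apply lintegral_mono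
    intro x
    dsimp only
    rw [← ENNReal.ofReal_mul (Real.exp_nonneg _), ← Real.exp_add]
    apply ENNReal.ofReal_le_ofReal
    apply Real.exp_le_exp.mpr
    have hU := Ucex_nonneg x
    have hk := key x
    nlinarith
  have hgauss : (∫⁻ t : ℝ, ENNReal.ofReal (Real.exp (-(ε/2) * t^2))) < ⊤ := by
    have hint : Integrable (fun t : ℝ => Real.exp (-(ε/2) * t^2)) := by
      exact integrable_exp_neg_mul_sq (by positivity)
    exact hint.lintegral_lt_top
  have htrans : (∫⁻ x : Fin 2 → ℝ, ENNReal.ofReal (Real.exp (-(ε/2) * (x 0)^2))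
        * ENNReal.ofReal (Real.exp (-(ε/2) * (x 1)^2)))
      = (∫⁻ t : ℝ, ENNReal.ofReal (Real.exp (-(ε/2) * t^2)))
        * (∫⁻ t : ℝ, ENNReal.ofReal (Real.exp (-(ε/2) * t^2))) := by
    have hmp : MeasurePreserving (MeasurableEquiv.finTwoArrow.symm : ℝ × ℝ ≃ᵐ (Fin 2 → ℝ))
        volume volume := (volume_preserving_finTwoArrow ℝ).symm
    rw [← hmp.lintegral_comp_emb (MeasurableEquiv.finTwoArrow.symm).measurableEmbedding]
    have : ∀ p : ℝ × ℝ, (MeasurableEquiv.finTwoArrow.symm p : Fin 2 → ℝ) 0 = p.1 ∧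
        (MeasurableEquiv.finTwoArrow.symm p : Fin 2 → ℝ) 1 = p.2 := by
      intro p
      constructor <;> simp [MeasurableEquiv.finTwoArrow]
    simp_rw [fun p => (this p).1, fun p => (this p).2]
    rw [MeasureTheory.Measure.volume_eq_prod]
    exact lintegral_prod_mul
      ((ENNReal.measurable_ofReal.comp
        (Real.measurable_exp.comp (by fun_prop : Measurable fun t : ℝ => -(ε/2) * t^2))).aemeasurable)
      ((ENNReal.measurable_ofReal.comp
        (Real.measurable_exp.comp (by fun_prop : Measurable fun t : ℝ => -(ε/2) * t^2))).aemeasurable)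
  apply ne_top_of_le_ne_top _ hbound
  rw [htrans]
  exact (ENNReal.mul_lt_top hgauss hgauss).ne


lemma zcex_iff (A : Matrix (Fin 2) (Fin 2) ℝ) (hA : A.IsSymm) :
    Zcex A Ucex ≠ ⊤ ↔ A.PosDef := by
  have h10 : A 1 0 = A 0 1 := by
    have := congrFun (congrFun hA 0) 1
    simpa [Matrix.transpose_apply] using this
  constructor
  · intro hfin
    by_contra hnpd
    rw [posdef_iff A hA] at hnpd
    apply hfin
    apply zcex_top_of_nd A h10
    rcases le_or_gt (A 0 0) 0 with h | h
    · exact Or.inl h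
    · right
      by_contra h2
      push_neg at h2
      exact hnpd ⟨h, by rw [h10]; linarith⟩
  · intro hpd
    obtain ⟨h1, h2⟩ := (posdef_iff A hA).mp hpd
    exact zcex_finite A h10 h1 (by rw [h10] at h2; linarith)

end CexAux

/-- `Ucex ≥ 0`, its partition function domain among symmetric matrices is
exactly the positive definite cone, and this domain is open. -/
theorem cex_domain_eq_posDef :
    (∀ x, 0 ≤ Ucex x) ∧
    (∀ A : Matrix (Fin 2) (Fin 2) ℝ, A.IsSymm → (Zcex A Ucex ≠ ⊤ ↔ A.PosDef)) ∧
    IsOpen {A : {B : Matrix (Fin 2) (Fin 2) ℝ // B.IsSymm} | Zcex A.1 Ucex ≠ ⊤} := by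
  refine ⟨Ucex_nonneg, fun A hA => zcex_iff A hA, ?_⟩
  have hset : {A : {B : Matrix (Fin 2) (Fin 2) ℝ // B.IsSymm} | Zcex A.1 Ucex ≠ ⊤}
      = {A : {B : Matrix (Fin 2) (Fin 2) ℝ // B.IsSymm} | 0 < A.1 0 0}
        ∩ {A : {B : Matrix (Fin 2) (Fin 2) ℝ // B.IsSymm} |
            0 < A.1 0 0 * A.1 1 1 - A.1 0 1 * A.1 1 0} := by
    ext A
    simp only [Set.mem_setOf_eq, Set.mem_inter_iff]
    rw [zcex_iff A.1 A.2, posdef_iff A.1 A.2]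
  rw [hset]
  have hc00 : Continuous fun A : {B : Matrix (Fin 2) (Fin 2) ℝ // B.IsSymm} => A.1 0 0 :=
    (continuous_apply (0 : Fin 2)).comp ((continuous_apply (0 : Fin 2)).comp continuous_subtype_val)
  have hc01 : Continuous fun A : {B : Matrix (Fin 2) (Fin 2) ℝ // B.IsSymm} => A.1 0 1 :=
    (continuous_apply (1 : Fin 2)).comp ((continuous_apply (0 : Fin 2)).comp continuous_subtype_val)
  have hc10 : Continuous fun A : {B : Matrix (Fin 2) (Fin 2) ℝ // B.IsSymm} => A.1 1 0 :=
    (continuous_apply (0 : Fin 2)).comp ((continuous_apply (1 : Fin 2)).comp continuous_subtype_val)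
  have hc11 : Continuous fun A : {B : Matrix (Fin 2) (Fin 2) ℝ // B.IsSymm} => A.1 1 1 :=
    (continuous_apply (1 : Fin 2)).comp ((continuous_apply (1 : Fin 2)).comp continuous_subtype_val)
  exact (isOpen_lt continuous_const hc00).inter
    (isOpen_lt continuous_const ((hc00.mul hc11).sub (hc01.mul hc10)))
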